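/- Consider three vertices v₁, v₂, v₃, each of attack length 2 and cost 1, with detection probability p = 1, patrolled by one patroller. The memoryless strategy that in each round selects uniformly at random one of the two vertices not visited in the previous round achieves level of protection exactly 1/2, which is strictly worse than the 5/9 achieved by the fully uniform strategy. -/
import Mathlib


theorem stmt_5 :
    let T : Fin 3 → Fin 3 → ℝ := fun v w => if w = v then 0 else 1 / 2
    -- probability that an attack (length 2) on vertex u, launched when the
    -- patroller currently sits at v, is missed in both of the next two rounds
    let miss : Fin 3 → Fin 3 → ℝ := fun v u =>
      ∑ w, (if w = u then 0 else T v w) * (∑ w', if w' = u then 0 else T w w')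
    (1 - ⨆ v, ⨆ u, miss v u) = 1 / 2 ∧ (1 / 2 : ℝ) < 5 / 9 := by
  intro T miss
  have h : ∀ v u, miss v u = if u = v then 1 / 2 else 1 / 4 := by
    intro v u
    simp only [miss, T, Fin.sum_univ_three]
    fin_cases v <;> fin_cases u <;> norm_num [Fin.ext_iff]
  have hsup : (⨆ v, ⨆ u, miss v u) = 1 / 2 := by
    apply le_antisymm
    · apply ciSup_le; intro v; apply ciSup_le; intro u
      rw [h]; split <;> norm_num
    · calc (1 / 2 : ℝ) = miss 0 0 := by rw [h]; norm_num
        _ ≤ ⨆ u, miss 0 u := le_ciSup (Finite.bddAbove_range _) 0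
        _ ≤ ⨆ v, ⨆ u, miss v u := le_ciSup (f := fun v => ⨆ u, miss v u) (Finite.bddAbove_range _) 0
  rw [hsup]
  norm_num
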